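/- Let 0 < ε < 1 and define ψ on T^2 by ψ(z) = z2 (1 − ε z1 \overline{z2})^2 / |1 − ε z1 \overline{z2}|^2. Then |ψ(z)| = 1 for all z ∈ T^2, and the Riesz projection of ψ (retaining Fourier modes with both indices nonnegative) equals φ(z) = −ε z1 + (1 − ε^2) z2. -/

import Mathlib

open scoped Real

/-- The `(a,b)` Fourier coefficient of a function on the 2-torus, parametrized by angles. -/
noncomputable def fourierCoef (h : ℝ → ℝ → ℂ) (a b : ℤ) : ℂ :=
  (1 / (2 * π) ^ 2 : ℂ) * ∫ θ₁ in (0:ℝ)..(2 * π), ∫ θ₂ in (0:ℝ)..(2 * π),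
    h θ₁ θ₂ * Complex.exp (-Complex.I * ((a : ℂ) * θ₁ + (b : ℂ) * θ₂))

/-- The Riesz projection on the 2-torus: keep only the Fourier modes with both
indices nonnegative. -/
noncomputable def rieszProj (h : ℝ → ℝ → ℂ) (θ₁ θ₂ : ℝ) : ℂ :=
  ∑' q : ℕ × ℕ, fourierCoef h q.1 q.2 *
    Complex.exp (Complex.I * ((q.1 : ℂ) * θ₁ + (q.2 : ℂ) * θ₂))

/-- `ψ(z) = z₂ (1 - ε z₁ z̄₂)² / |1 - ε z₁ z̄₂|²` on the torus, in angle coordinates. -/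
noncomputable def psi (ε θ₁ θ₂ : ℝ) : ℂ :=
  Complex.exp (Complex.I * θ₂) *
    (1 - (ε : ℂ) * Complex.exp (Complex.I * θ₁) * (starRingEnd ℂ) (Complex.exp (Complex.I * θ₂))) ^ 2 /
    ((‖1 - (ε : ℂ) * Complex.exp (Complex.I * θ₁)
        * (starRingEnd ℂ) (Complex.exp (Complex.I * θ₂))‖ : ℂ)) ^ 2

/-! ### Auxiliary material -/

open Complex MeasureTheory intervalIntegral

noncomputable def J (m : ℤ) : ℂ := if m = 0 then (2*π:ℂ) else 0

lemma exp_I_int_mul (m : ℤ) (θ : ℝ) :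
    Complex.exp (Complex.I * (m:ℂ) * θ) = Complex.exp (Complex.I * θ) ^ m := by
  rw [show Complex.I * (m:ℂ) * θ = (m:ℂ) * (Complex.I*θ) by ring, Complex.exp_int_mul]

lemma integral_exp_I (m : ℤ) :
    ∫ θ in (0:ℝ)..(2*π), Complex.exp (Complex.I * (m:ℂ) * θ) = J m := by
  unfold J
  rcases eq_or_ne m 0 with h|h
  · simp [h]
  · rw [if_neg h]
    have hc : (Complex.I * (m:ℂ)) ≠ 0 := by
      simp [Complex.I_ne_zero, Complex.ext_iff]
      exact_mod_cast h
    have : ∀ θ : ℝ, Complex.I * (m:ℂ) * θ = (Complex.I * (m:ℂ)) * (θ:ℂ) := fun θ => by ring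
    rw [intervalIntegral.integral_congr (g := fun θ : ℝ => Complex.exp ((Complex.I * m) * (θ:ℂ)))
      (fun θ _ => by rw [this])]
    rw [integral_exp_mul_complex hc]
    have : Complex.exp (Complex.I * (m:ℂ) * (2*π:ℝ)) = 1 := by
      rw [show Complex.I * (m:ℂ) * ((2*π:ℝ):ℂ) = (m:ℂ) * (2*π*Complex.I) by push_cast; ring]
      exact Complex.exp_int_mul_two_pi_mul_I m
    push_cast at this ⊢
    simp [this]

lemma cont_exp_I (m : ℤ) : Continuous (fun θ : ℝ => Complex.exp (Complex.I * (m:ℂ) * θ)) := by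
  fun_prop

lemma abs_exp_I (θ : ℝ) : ‖Complex.exp (Complex.I * θ)‖ = 1 := by
  rw [mul_comm]; exact Complex.norm_exp_ofReal_mul_I θ

lemma abs_exp_I_int (m : ℤ) (θ : ℝ) :
    ‖Complex.exp (Complex.I * (m:ℂ) * θ)‖ = 1 := by
  rw [show Complex.I * (m:ℂ) * θ = Complex.I * (((m:ℝ)*θ : ℝ):ℂ) by push_cast; ring]
  exact abs_exp_I _

noncomputable def term (ε : ℝ) (n : ℕ) (θ₁ θ₂ : ℝ) : ℂ :=
  (ε:ℂ)^n * Complex.exp (Complex.I * ((-(n:ℤ) : ℤ):ℂ) * θ₁)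
      * Complex.exp (Complex.I * (((n:ℤ)+1 : ℤ):ℂ) * θ₂)
    - (ε:ℂ)^(n+1) * Complex.exp (Complex.I * ((1-(n:ℤ) : ℤ):ℂ) * θ₁)
      * Complex.exp (Complex.I * (((n:ℤ) : ℤ):ℂ) * θ₂)

section
variable (ε : ℝ) (hε : 0 < ε) (hε1 : ε < 1) (θ₁ θ₂ : ℝ)

lemma conj_exp (θ : ℝ) :
    (starRingEnd ℂ) (Complex.exp (Complex.I * θ)) = Complex.exp (-(Complex.I * θ)) := by
  rw [← Complex.exp_conj]; congr 1; simp

include hε in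
lemma abs_w : ‖(ε:ℂ) * Complex.exp (Complex.I * θ₁)
    * (starRingEnd ℂ) (Complex.exp (Complex.I * θ₂))‖ = ε := by
  rw [norm_mul, norm_mul, Complex.norm_conj, abs_exp_I, abs_exp_I, Complex.norm_real, Real.norm_eq_abs,
    abs_of_pos hε]
  ring

include hε hε1

lemma one_sub_w_ne : (1 : ℂ) - (ε:ℂ) * Complex.exp (Complex.I * θ₁)
    * (starRingEnd ℂ) (Complex.exp (Complex.I * θ₂)) ≠ 0 := by
  intro h
  have h1 : (ε:ℂ) * Complex.exp (Complex.I * θ₁)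
      * (starRingEnd ℂ) (Complex.exp (Complex.I * θ₂)) = 1 := by
    linear_combination -h
  have := abs_w ε hε θ₁ θ₂
  rw [h1] at this
  simp at this
  linarith

lemma psi_abs : ‖psi ε θ₁ θ₂‖ = 1 := by
  have hne := one_sub_w_ne ε hε hε1 θ₁ θ₂
  have habs : ‖1 - (ε:ℂ) * Complex.exp (Complex.I * θ₁)
      * (starRingEnd ℂ) (Complex.exp (Complex.I * θ₂))‖ ≠ 0 :=
    norm_ne_zero_iff.mpr hne
  unfold psi
  rw [norm_div, norm_mul, norm_pow, norm_pow, abs_exp_I, Complex.norm_real, Real.norm_eq_abs,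
    _root_.abs_of_nonneg (norm_nonneg _)]
  field_simp

lemma psi_tsum : psi ε θ₁ θ₂ = ∑' n : ℕ, term ε n θ₁ θ₂ := by
  set w := (ε:ℂ) * Complex.exp (Complex.I * θ₁)
      * (starRingEnd ℂ) (Complex.exp (Complex.I * θ₂)) with hw
  have hne : (1:ℂ) - w ≠ 0 := one_sub_w_ne ε hε hε1 θ₁ θ₂
  have habsw : ‖w‖ = ε := abs_w ε hε θ₁ θ₂
  have habscw : ‖(starRingEnd ℂ) w‖ = ε := by rw [Complex.norm_conj]; exact habsw
  have hnec : (1:ℂ) - (starRingEnd ℂ) w ≠ 0 := by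
    intro h
    have h1 : (starRingEnd ℂ) w = 1 := by linear_combination -h
    rw [h1] at habscw; simp at habscw; linarith
  have habs2 : ((‖(1:ℂ) - w‖ : ℝ) : ℂ)^2 = ((1:ℂ)-w) * ((1:ℂ) - (starRingEnd ℂ) w) := by
    rw [← Complex.ofReal_pow, Complex.sq_norm, ← Complex.mul_conj]
    simp
  have hpsi : psi ε θ₁ θ₂ = Complex.exp (Complex.I * θ₂) * ((1:ℂ)-w)
      * ((1:ℂ) - (starRingEnd ℂ) w)⁻¹ := by
    unfold psi
    rw [← hw, habs2]
    field_simp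
  rw [hpsi]
  have hgeo : ((1:ℂ) - (starRingEnd ℂ) w)⁻¹ = ∑' n : ℕ, ((starRingEnd ℂ) w)^n := by
    rw [tsum_geometric_of_norm_lt_one]
    rw [habscw]; exact hε1
  rw [hgeo, ← tsum_mul_left]
  refine tsum_congr fun n => ?_
  have hcw : (starRingEnd ℂ) w = (ε:ℂ) * Complex.exp (-(Complex.I * θ₁)) * Complex.exp (Complex.I * θ₂) := by
    rw [hw, map_mul, map_mul, Complex.conj_conj, Complex.conj_ofReal, conj_exp]
  rw [hcw, hw, conj_exp]
  set u := Complex.exp (Complex.I*θ₁) with hu'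
  set v := Complex.exp (Complex.I*θ₂) with hv'
  have hu : u ≠ 0 := Complex.exp_ne_zero _
  have hv : v ≠ 0 := Complex.exp_ne_zero _
  have e0a : Complex.exp (-(Complex.I * θ₁)) = u⁻¹ := by rw [hu']; exact Complex.exp_neg _
  have e0b : Complex.exp (-(Complex.I * θ₂)) = v⁻¹ := by rw [hv']; exact Complex.exp_neg _
  unfold term
  have e1 : Complex.exp (Complex.I * ((-(n:ℤ):ℤ):ℂ) * θ₁) = (u^n)⁻¹ := by
    rw [show Complex.I * ((-(n:ℤ):ℤ):ℂ) * θ₁ = -((n:ℕ) * (Complex.I*θ₁)) by push_cast; ring,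
      Complex.exp_neg, Complex.exp_nat_mul]
  have e2 : Complex.exp (Complex.I * (((n:ℤ)+1:ℤ):ℂ) * θ₂) = v^n * v := by
    rw [show Complex.I * (((n:ℤ)+1:ℤ):ℂ) * θ₂ = (n:ℕ) * (Complex.I*θ₂) + Complex.I*θ₂ by push_cast; ring,
      Complex.exp_add, Complex.exp_nat_mul]
  have e3 : Complex.exp (Complex.I * ((1-(n:ℤ):ℤ):ℂ) * θ₁) = u * (u^n)⁻¹ := by
    rw [show Complex.I * ((1-(n:ℤ):ℤ):ℂ) * θ₁ = Complex.I*θ₁ + -((n:ℕ) * (Complex.I*θ₁)) by push_cast; ring,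
      Complex.exp_add, Complex.exp_neg, Complex.exp_nat_mul]
  have e4 : Complex.exp (Complex.I * (((n:ℤ):ℤ):ℂ) * θ₂) = v^n := by
    rw [show Complex.I * (((n:ℤ):ℤ):ℂ) * θ₂ = (n:ℕ) * (Complex.I*θ₂) by push_cast; ring,
      Complex.exp_nat_mul]
  simp only [e0a, e0b, e1, e2, e3, e4]
  field_simp
  rw [div_pow, mul_assoc, div_mul_cancel₀ _ (pow_ne_zero n hu)]
  ring

end

lemma g_eq (ε : ℝ) (a b : ℕ) (n : ℕ) (θ₁ θ₂ : ℝ) :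
    term ε n θ₁ θ₂ * Complex.exp (-Complex.I * ((a:ℂ)*θ₁ + (b:ℂ)*θ₂))
    = (ε:ℂ)^n * Complex.exp (Complex.I * ((-(n:ℤ)-(a:ℤ) : ℤ):ℂ) * θ₁)
        * Complex.exp (Complex.I * (((n:ℤ)+1-(b:ℤ) : ℤ):ℂ) * θ₂)
      - (ε:ℂ)^(n+1) * Complex.exp (Complex.I * ((1-(n:ℤ)-(a:ℤ) : ℤ):ℂ) * θ₁)
        * Complex.exp (Complex.I * (((n:ℤ)-(b:ℤ) : ℤ):ℂ) * θ₂) := by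
  have hsplit : Complex.exp (-Complex.I * ((a:ℂ)*θ₁ + (b:ℂ)*θ₂))
      = Complex.exp (Complex.I * ((-(a:ℤ):ℤ):ℂ) * θ₁) * Complex.exp (Complex.I * ((-(b:ℤ):ℤ):ℂ) * θ₂) := by
    rw [← Complex.exp_add]; congr 1; push_cast; ring
  rw [hsplit]
  unfold term
  simp only [exp_I_int_mul]
  set u := Complex.exp (Complex.I*θ₁)
  set v := Complex.exp (Complex.I*θ₂)
  have hu : u ≠ 0 := Complex.exp_ne_zero _
  have hv : v ≠ 0 := Complex.exp_ne_zero _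
  simp only [zpow_sub₀ hu, zpow_add₀ hu, zpow_neg, zpow_natCast, zpow_one,
    zpow_sub₀ hv, zpow_add₀ hv]
  field_simp

lemma term_bound (ε : ℝ) (hε : 0 < ε) (hε1 : ε < 1) (n : ℕ) (θ₁ θ₂ : ℝ) :
    ‖term ε n θ₁ θ₂‖ ≤ 2 * ε^n := by
  unfold term
  refine le_trans (norm_sub_le _ _) ?_
  rw [norm_mul, norm_mul, norm_mul, norm_mul, abs_exp_I_int, abs_exp_I_int, abs_exp_I_int,
    abs_exp_I_int, norm_pow, norm_pow, Complex.norm_real, Real.norm_eq_abs, abs_of_pos hε]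
  have h1 : ε^(n+1) ≤ ε^n := pow_le_pow_of_le_one hε.le hε1.le (by omega)
  nlinarith [pow_pos hε n]

lemma g_bound (ε : ℝ) (hε : 0 < ε) (hε1 : ε < 1) (a b : ℕ) (n : ℕ) (θ₁ θ₂ : ℝ) :
    ‖term ε n θ₁ θ₂ * Complex.exp (-Complex.I * ((a:ℂ)*θ₁ + (b:ℂ)*θ₂))‖ ≤ 2 * ε^n := by
  rw [norm_mul]
  have : ‖Complex.exp (-Complex.I * ((a:ℂ)*θ₁ + (b:ℂ)*θ₂))‖ = 1 := by
    rw [Complex.norm_exp]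
    norm_num [Complex.add_re, Complex.mul_re]
  rw [this, mul_one]
  exact term_bound ε hε hε1 n θ₁ θ₂

lemma g_cont (ε : ℝ) (a b : ℕ) (n : ℕ) (θ₁ : ℝ) :
    Continuous (fun θ₂ : ℝ => term ε n θ₁ θ₂ * Complex.exp (-Complex.I * ((a:ℂ)*θ₁ + (b:ℂ)*θ₂))) := by
  unfold term
  fun_prop

lemma inner_swap (ε : ℝ) (hε : 0 < ε) (hε1 : ε < 1) (a b : ℕ) (θ₁ : ℝ) :
    (∫ θ₂ in (0:ℝ)..(2*π), ∑' n : ℕ, term ε n θ₁ θ₂ * Complex.exp (-Complex.I * ((a:ℂ)*θ₁ + (b:ℂ)*θ₂)))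
    = ∑' n : ℕ, ∫ θ₂ in (0:ℝ)..(2*π), term ε n θ₁ θ₂ * Complex.exp (-Complex.I * ((a:ℂ)*θ₁ + (b:ℂ)*θ₂)) := by
  have h2π : (0:ℝ) ≤ 2*π := by positivity
  simp only [intervalIntegral.integral_of_le h2π]
  apply MeasureTheory.integral_tsum
  · exact fun n => ((g_cont ε a b n θ₁).aestronglyMeasurable).restrict
  · apply ne_top_of_le_ne_top
      (b := ∑' n : ℕ, ENNReal.ofReal (2*ε^n) * ENNReal.ofReal (2*π))
    · rw [ENNReal.tsum_mul_right]
      apply ENNReal.mul_ne_top _ ENNReal.ofReal_ne_top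
      have hsum : Summable (fun n : ℕ => 2*ε^n) :=
        (summable_geometric_of_lt_one hε.le hε1).mul_left 2
      rw [← ENNReal.ofReal_tsum_of_nonneg (fun n => by positivity) hsum]
      exact ENNReal.ofReal_ne_top
    · apply ENNReal.tsum_le_tsum
      intro n
      calc ∫⁻ θ₂ in Set.Ioc (0:ℝ) (2*π), ‖term ε n θ₁ θ₂ * Complex.exp (-Complex.I * ((a:ℂ)*θ₁ + (b:ℂ)*θ₂))‖₊
          ≤ ∫⁻ _ in Set.Ioc (0:ℝ) (2*π), ENNReal.ofReal (2*ε^n) := by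
            apply MeasureTheory.lintegral_mono
            intro θ₂
            dsimp only
            rw [← ENNReal.ofReal_coe_nnreal, coe_nnnorm]
            exact ENNReal.ofReal_le_ofReal (g_bound ε hε hε1 a b n θ₁ θ₂)
        _ = ENNReal.ofReal (2*ε^n) * ENNReal.ofReal (2*π) := by
            rw [MeasureTheory.setLIntegral_const, Real.volume_Ioc, sub_zero]

noncomputable def innerInt (ε : ℝ) (a b n : ℕ) (θ₁ : ℝ) : ℂ :=
  (ε:ℂ)^n * Complex.exp (Complex.I * ((-(n:ℤ)-(a:ℤ) : ℤ):ℂ) * θ₁) * J ((n:ℤ)+1-(b:ℤ))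
  - (ε:ℂ)^(n+1) * Complex.exp (Complex.I * ((1-(n:ℤ)-(a:ℤ) : ℤ):ℂ) * θ₁) * J ((n:ℤ)-(b:ℤ))

lemma integral_g (ε : ℝ) (a b n : ℕ) (θ₁ : ℝ) :
    (∫ θ₂ in (0:ℝ)..(2*π), term ε n θ₁ θ₂ * Complex.exp (-Complex.I * ((a:ℂ)*θ₁ + (b:ℂ)*θ₂)))
    = innerInt ε a b n θ₁ := by
  rw [intervalIntegral.integral_congr (g := fun θ₂ =>
    (ε:ℂ)^n * Complex.exp (Complex.I * ((-(n:ℤ)-(a:ℤ) : ℤ):ℂ) * θ₁)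
        * Complex.exp (Complex.I * (((n:ℤ)+1-(b:ℤ) : ℤ):ℂ) * θ₂)
      - (ε:ℂ)^(n+1) * Complex.exp (Complex.I * ((1-(n:ℤ)-(a:ℤ) : ℤ):ℂ) * θ₁)
        * Complex.exp (Complex.I * (((n:ℤ)-(b:ℤ) : ℤ):ℂ) * θ₂)) (fun θ₂ _ => g_eq ε a b n θ₁ θ₂)]
  unfold innerInt
  rw [intervalIntegral.integral_sub
      ?_
      ?_,
    intervalIntegral.integral_const_mul, intervalIntegral.integral_const_mul,
    integral_exp_I, integral_exp_I]
  all_goals exact Continuous.intervalIntegrable (by fun_prop) _ _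

lemma tsum_innerInt_zero (ε : ℝ) (a : ℕ) (θ₁ : ℝ) :
    (∑' n : ℕ, innerInt ε a 0 n θ₁)
    = (-(ε:ℂ) * (2*π)) * Complex.exp (Complex.I * ((1-(a:ℤ) : ℤ):ℂ) * θ₁) := by
  rw [tsum_eq_single 0 ?side]
  case side =>
    intro n hn
    unfold innerInt J
    rw [if_neg (by omega), if_neg (by omega)]
    ring
  unfold innerInt J
  rw [if_neg (by omega), if_pos (by omega)]
  rw [show (1-(0:ℕ)-(a:ℤ) : ℤ) = (1-(a:ℤ) : ℤ) by omega]
  push_cast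
  ring

lemma tsum_innerInt_succ (ε : ℝ) (a k : ℕ) (θ₁ : ℝ) :
    (∑' n : ℕ, innerInt ε a (k+1) n θ₁)
    = (((ε:ℂ)^k - (ε:ℂ)^(k+2)) * (2*π)) * Complex.exp (Complex.I * ((-(k:ℤ)-(a:ℤ) : ℤ):ℂ) * θ₁) := by
  rw [tsum_eq_sum (s := ({k, k+1} : Finset ℕ)) ?side]
  case side =>
    intro n hn
    simp only [Finset.mem_insert, Finset.mem_singleton] at hn
    push_neg at hn
    unfold innerInt J
    rw [if_neg (by omega), if_neg (by omega)]
    ring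
  rw [Finset.sum_insert (by simp), Finset.sum_singleton]
  unfold innerInt J
  rw [if_pos (by omega), if_neg (by omega), if_neg (by omega), if_pos (by omega)]
  rw [show (1-((k+1:ℕ):ℤ)-(a:ℤ) : ℤ) = (-(k:ℤ)-(a:ℤ) : ℤ) by push_cast; ring,
    show ((k:ℕ)+1+1) = k+2 from rfl]
  ring

lemma fourierCoef_psi (ε : ℝ) (hε : 0 < ε) (hε1 : ε < 1) (a b : ℕ) :
    fourierCoef (psi ε) (a:ℤ) (b:ℤ) =
      if a = 0 ∧ b = 1 then 1 - (ε:ℂ)^2 else if a = 1 ∧ b = 0 then -(ε:ℂ) else 0 := by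
  unfold fourierCoef
  have hπ : (π:ℝ) ≠ 0 := Real.pi_ne_zero
  have hπc : ((π:ℝ):ℂ) ≠ 0 := by exact_mod_cast hπ
  have hψ : ∀ θ₁ θ₂ : ℝ, psi ε θ₁ θ₂ * Complex.exp (-Complex.I * ((((a:ℤ)):ℂ) * θ₁ + (((b:ℤ)):ℂ) * θ₂))
      = ∑' n : ℕ, term ε n θ₁ θ₂ * Complex.exp (-Complex.I * ((a:ℂ)*θ₁ + (b:ℂ)*θ₂)) := by
    intro θ₁ θ₂
    rw [show ((((a:ℤ)):ℂ) * (θ₁:ℂ) + (((b:ℤ)):ℂ) * θ₂) = ((a:ℂ)*θ₁ + (b:ℂ)*θ₂) by push_cast; ring,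
      psi_tsum ε hε hε1 θ₁ θ₂, ← tsum_mul_right]
  have houter : ∀ θ₁ : ℝ,
      (∫ θ₂ in (0:ℝ)..(2*π), psi ε θ₁ θ₂ * Complex.exp (-Complex.I * ((((a:ℤ)):ℂ) * θ₁ + (((b:ℤ)):ℂ) * θ₂)))
      = ∑' n : ℕ, innerInt ε a b n θ₁ := by
    intro θ₁
    rw [intervalIntegral.integral_congr (fun θ₂ _ => hψ θ₁ θ₂), inner_swap ε hε hε1 a b θ₁]
    exact tsum_congr fun n => integral_g ε a b n θ₁
  rw [intervalIntegral.integral_congr (fun θ₁ _ => houter θ₁)]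
  rcases b with _ | k
  · -- b = 0
    rw [intervalIntegral.integral_congr (g := fun θ₁ =>
        (-(ε:ℂ) * (2*π)) * Complex.exp (Complex.I * ((1-(a:ℤ) : ℤ):ℂ) * θ₁))
        (fun θ₁ _ => tsum_innerInt_zero ε a θ₁),
      intervalIntegral.integral_const_mul, integral_exp_I]
    unfold J
    rcases eq_or_ne a 1 with ha | ha
    · subst ha
      rw [if_pos (by omega)]
      norm_num
      field_simp
    · rw [if_neg (by omega)]
      simp [ha]
  · -- b = k+1
    rw [intervalIntegral.integral_congr (g := fun θ₁ =>
        (((ε:ℂ)^k - (ε:ℂ)^(k+2)) * (2*π)) * Complex.exp (Complex.I * ((-(k:ℤ)-(a:ℤ) : ℤ):ℂ) * θ₁))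
        (fun θ₁ _ => tsum_innerInt_succ ε a k θ₁),
      intervalIntegral.integral_const_mul, integral_exp_I]
    unfold J
    by_cases h : a = 0 ∧ k = 0
    · obtain ⟨ha, hk⟩ := h
      subst ha; subst hk
      rw [if_pos (by omega)]
      norm_num
      field_simp
    · rw [if_neg (by omega)]
      have h1 : ¬ (a = 0 ∧ k + 1 = 1) := by omega
      rw [if_neg h1, if_neg (by omega)]
      simp

theorem stmt16 (ε : ℝ) (hε : 0 < ε) (hε1 : ε < 1) :
    (∀ θ₁ θ₂ : ℝ, ‖psi ε θ₁ θ₂‖ = 1) ∧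
    ∀ θ₁ θ₂ : ℝ, rieszProj (psi ε) θ₁ θ₂
      = -(ε : ℂ) * Complex.exp (Complex.I * θ₁)
        + (1 - (ε : ℂ) ^ 2) * Complex.exp (Complex.I * θ₂) := by
  refine ⟨fun θ₁ θ₂ => psi_abs ε hε hε1 θ₁ θ₂, fun θ₁ θ₂ => ?_⟩
  unfold rieszProj
  rw [tsum_eq_sum (s := ({(1,0),(0,1)} : Finset (ℕ × ℕ))) ?side]
  case side =>
    intro q hq
    simp only [Finset.mem_insert, Finset.mem_singleton] at hq
    push_neg at hq
    obtain ⟨h1, h2⟩ := hq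
    rw [fourierCoef_psi ε hε hε1 q.1 q.2]
    rw [if_neg, if_neg]
    · ring
    · intro h
      exact h1 (Prod.ext h.1 h.2)
    · intro h
      exact h2 (Prod.ext h.1 h.2)
  rw [Finset.sum_insert (by decide), Finset.sum_singleton]
  rw [fourierCoef_psi ε hε hε1 1 0, fourierCoef_psi ε hε hε1 0 1]
  norm_num
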